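/- Let G = (V, E) be a finite simple graph of neighborhood independence at most r (r ≥ 1), and let y be a greedy packing of G such that Σ_y(v) ≥ 1/2 for every vertex v ∈ V. Then every independent set S of G satisfies |S| ≤ 2r · Σ_{v ∈ V} y_v. -/

import Mathlib

open Finset
open Classical

/-- A greedy packing of a finite simple graph `G`: a nonnegative vertex vector `x` for
which there is a (strict) linear order `p` on the vertices such that for every vertex `v`,
`x v` plus the sum of `x u` over neighbors `u` of `v` preceding `v` is at most `1`. -/
def IsGreedyPacking {V : Type*} [Fintype V] (G : SimpleGraph V) [DecidableRel G.Adj]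
    (x : V → ℝ) : Prop :=
  (∀ v : V, 0 ≤ x v) ∧
  ∃ p : V → V → Prop, IsStrictTotalOrder V p ∧
    ∀ v : V, x v + ∑ u ∈ G.neighborFinset v, (if p u v then x u else 0) ≤ 1

/-- In a finite simple graph of neighborhood independence at most `r`,
if `y` is a greedy packing with `Σ_y(v) ≥ 1/2` for every vertex `v`, then every
independent set `S` satisfies `|S| ≤ 2r · Σ_v y_v`. -/
theorem greedyPacking_saturated_independent_bound
    {V : Type*} [Fintype V] [DecidableEq V]
    (G : SimpleGraph V) [DecidableRel G.Adj]
    (r : ℕ) (hr : 1 ≤ r)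
    (hni : ∀ v : V, ∀ S : Finset V, (∀ u ∈ S, G.Adj v u) →
      (∀ u ∈ S, ∀ w ∈ S, u ≠ w → ¬ G.Adj u w) → S.card ≤ r)
    (y : V → ℝ) (hy : IsGreedyPacking G y)
    (hsat : ∀ v : V, (1 : ℝ) / 2 ≤ y v + ∑ u ∈ G.neighborFinset v, y u)
    (S : Finset V)
    (hSind : ∀ u ∈ S, ∀ w ∈ S, u ≠ w → ¬ G.Adj u w) :
    (S.card : ℝ) ≤ 2 * r * ∑ v : V, y v := by
  obtain ⟨hy0, -⟩ := hy
  -- Sum the saturation inequality over `S`, written with indicators over all of `V`.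
  have key : ∀ v ∈ S, (1 : ℝ) / 2 ≤
      ∑ u : V, (if u ∈ insert v (G.neighborFinset v) then y u else 0) := by
    intro v _
    rw [Finset.sum_ite_mem, Finset.univ_inter,
      Finset.sum_insert (SimpleGraph.notMem_neighborFinset_self G v)]
    exact hsat v
  have h1 : (S.card : ℝ) / 2 ≤
      ∑ v ∈ S, ∑ u : V, (if u ∈ insert v (G.neighborFinset v) then y u else 0) := by
    calc (S.card : ℝ) / 2 = ∑ _v ∈ S, (1 : ℝ) / 2 := by
          rw [Finset.sum_const, nsmul_eq_mul]; ring
      _ ≤ _ := Finset.sum_le_sum key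
  rw [Finset.sum_comm] at h1
  -- Each vertex `u` is in `N⁺(v)` for at most `r` vertices `v ∈ S`.
  have h2 : ∀ u : V,
      ∑ v ∈ S, (if u ∈ insert v (G.neighborFinset v) then y u else 0) ≤ (r : ℝ) * y u := by
    intro u
    set T := S.filter (fun v => u ∈ insert v (G.neighborFinset v)) with hT
    have hcard : T.card ≤ r := by
      by_cases hu : u ∈ S
      · have hsub : T ⊆ {u} := by
          intro v hv
          simp only [hT, Finset.mem_filter, Finset.mem_insert,
            SimpleGraph.mem_neighborFinset] at hv
          obtain ⟨hvS, h | h⟩ := hv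
          · simp [h]
          · exfalso
            have hne : v ≠ u := fun he => G.loopless.irrefl u (he ▸ h)
            exact hSind v hvS u hu hne h
        calc T.card ≤ ({u} : Finset V).card := Finset.card_le_card hsub
          _ = 1 := Finset.card_singleton u
          _ ≤ r := hr
      · refine hni u T (fun v hv => ?_) (fun a ha b hb hab => ?_)
        · simp only [hT, Finset.mem_filter, Finset.mem_insert,
            SimpleGraph.mem_neighborFinset] at hv
          obtain ⟨hvS, h | h⟩ := hv
          · exact absurd (h ▸ hvS) hu
          · exact h.symm
        · exact hSind a (Finset.mem_filter.mp ha).1 b (Finset.mem_filter.mp hb).1 hab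
    have : ∑ v ∈ S, (if u ∈ insert v (G.neighborFinset v) then y u else 0)
        = (T.card : ℝ) * y u := by
      rw [hT, ← Finset.sum_filter, Finset.sum_const, nsmul_eq_mul]
    rw [this]
    exact mul_le_mul_of_nonneg_right (by exact_mod_cast hcard) (hy0 u)
  have h3 : ∑ u : V, ∑ v ∈ S, (if u ∈ insert v (G.neighborFinset v) then y u else 0)
      ≤ (r : ℝ) * ∑ v : V, y v := by
    rw [Finset.mul_sum]
    exact Finset.sum_le_sum fun u _ => h2 u
  linarith
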